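/- Let L > 0 and let f : E → ℝ be convex with nonempty minimizer set X* and minimum value f*, and suppose f is L-QG+. Let (x_k)_{k≥0} in E and (g_k)_{k≥0} in E satisfy g_k ∈ ∂f(x_k) and x_{k+1} = x_k − (1/L)·g_k for all k ≥ 0. Then for every n ∈ ℕ, ∑_{k=0}^{n} (f(x_k) − f*) ≤ (L/2)·d(x_0, X*)²; in particular (1/(n+1))·∑_{k=0}^{n} (f(x_k) − f*) ≤ (L/(2(n+1)))·d(x_0, X*)². -/

import Mathlib

open scoped RealInnerProductSpace

theorem subgradient_method_sum_bound
    {E : Type*} [NormedAddCommGroup E] [InnerProductSpace ℝ E] [FiniteDimensional ℝ E]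
    (L : ℝ) (hL : 0 < L) (f : E → ℝ) (hconv : ConvexOn ℝ Set.univ f)
    (Xstar : Set E) (hXstar : Xstar = {z | ∀ y, f z ≤ f y}) (hne : Xstar.Nonempty)
    (fstar : ℝ) (hfstar : ∀ z ∈ Xstar, f z = fstar)
    (hQG : ∀ z, f z - fstar ≤ L / 2 * Metric.infDist z Xstar ^ 2)
    (x g : ℕ → E)
    (hsub : ∀ k, ∀ y, f y ≥ f (x k) + ⟪g k, y - x k⟫)
    (hupd : ∀ k, x (k + 1) = x k - (1 / L) • g k) :
    ∀ n : ℕ,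
      (∑ k ∈ Finset.range (n + 1), (f (x k) - fstar))
          ≤ L / 2 * Metric.infDist (x 0) Xstar ^ 2 ∧
      (1 / ((n : ℝ) + 1)) * ∑ k ∈ Finset.range (n + 1), (f (x k) - fstar)
          ≤ L / (2 * ((n : ℝ) + 1)) * Metric.infDist (x 0) Xstar ^ 2 := by
  have hL' : L ≠ 0 := ne_of_gt hL
  have hcont : Continuous f := by
    rw [← continuousOn_univ]
    exact hconv.continuousOn isOpen_univ
  have hclosed : IsClosed Xstar := by
    rw [hXstar]
    have he : {z : E | ∀ y, f z ≤ f y} = ⋂ y, {z | f z ≤ f y} := by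
      ext w; simp [Set.mem_iInter]
    rw [he]
    exact isClosed_iInter fun y => isClosed_le hcont continuous_const
  -- key descent inequality
  have key : ∀ k, L / 2 * Metric.infDist (x (k + 1)) Xstar ^ 2 + (f (x k) - fstar)
      ≤ L / 2 * Metric.infDist (x k) Xstar ^ 2 := by
    intro k
    obtain ⟨z, hz, hdz⟩ := hclosed.exists_infDist_eq_dist hne (x k)
    have hfz : f z = fstar := hfstar z hz
    set a : ℝ := ⟪g k, x k - z⟫ with ha
    set N : ℝ := ‖g k‖ ^ 2 with hN
    have hNnn : 0 ≤ N := by positivity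
    -- bound on a via QG+ and subgradient at z + (1/L) • g k
    have hgin : f (x k) - fstar + N / (2 * L) ≤ a := by
      have h1 := hsub k (z + (1 / L) • g k)
      have hipe : ⟪g k, z + (1 / L) • g k - x k⟫ = (1 / L) * N - a := by
        have hre : z + (1 / L) • g k - x k = (1 / L) • g k - (x k - z) := by abel
        rw [hre, inner_sub_right, real_inner_smul_right, real_inner_self_eq_norm_sq, ← ha, ← hN]
      have h2 : f (z + (1 / L) • g k) - fstar ≤ N / (2 * L) := by
        have hd : Metric.infDist (z + (1 / L) • g k) Xstar ≤ (1 / L) * ‖g k‖ := by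
          calc Metric.infDist (z + (1 / L) • g k) Xstar ≤ dist (z + (1 / L) • g k) z :=
                Metric.infDist_le_dist_of_mem hz
            _ = ‖(1 / L) • g k‖ := by rw [dist_eq_norm]; congr 1; abel
            _ = (1 / L) * ‖g k‖ := by
                rw [norm_smul, Real.norm_eq_abs, abs_of_pos (by positivity : (0:ℝ) < 1 / L)]
        have hd2 : Metric.infDist (z + (1 / L) • g k) Xstar ^ 2 ≤ ((1 / L) * ‖g k‖) ^ 2 :=
          pow_le_pow_left₀ Metric.infDist_nonneg hd 2
        have hq := hQG (z + (1 / L) • g k)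
        have hcalc : L / 2 * (((1 / L) * ‖g k‖) ^ 2) = N / (2 * L) := by
          rw [hN]; field_simp
        nlinarith [hq, hd2, hL]
      have hcoef : (1 / L) * N - N / (2 * L) = N / (2 * L) := by field_simp <;> ring
      rw [hipe] at h1
      linarith
    -- norm expansion
    have hx1 : x (k + 1) - z = (x k - z) - (1 / L) • g k := by rw [hupd k]; abel
    have hnorm : ‖x (k + 1) - z‖ ^ 2
        = ‖x k - z‖ ^ 2 - 2 * ((1 / L) * a) + ((1 / L) * ‖g k‖) ^ 2 := by
      rw [hx1, norm_sub_sq_real, real_inner_smul_right, real_inner_comm, ← ha, norm_smul,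
        Real.norm_eq_abs, abs_of_pos (by positivity : (0:ℝ) < 1 / L)]
      try ring
    have hle1 : Metric.infDist (x (k + 1)) Xstar ≤ ‖x (k + 1) - z‖ := by
      rw [← dist_eq_norm]; exact Metric.infDist_le_dist_of_mem hz
    have hle2 : Metric.infDist (x (k + 1)) Xstar ^ 2 ≤ ‖x (k + 1) - z‖ ^ 2 :=
      pow_le_pow_left₀ Metric.infDist_nonneg hle1 2
    have hdk : Metric.infDist (x k) Xstar ^ 2 = ‖x k - z‖ ^ 2 := by
      rw [hdz, dist_eq_norm]
    have e1 : L / 2 * (2 * ((1 / L) * a)) = a := by field_simp <;> ring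
    have e2 : L / 2 * (((1 / L) * ‖g k‖) ^ 2) = N / (2 * L) := by
      rw [hN]; field_simp
    have hfin : L / 2 * ‖x (k + 1) - z‖ ^ 2 + (f (x k) - fstar) ≤ L / 2 * ‖x k - z‖ ^ 2 := by
      rw [hnorm]; nlinarith [hgin, e1, e2]
    have hL2 : (0:ℝ) ≤ L / 2 := by positivity
    have := mul_le_mul_of_nonneg_left hle2 hL2
    rw [hdk]
    linarith
  -- telescoping
  have tel : ∀ n : ℕ, (∑ k ∈ Finset.range (n + 1), (f (x k) - fstar))
      + L / 2 * Metric.infDist (x (n + 1)) Xstar ^ 2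
      ≤ L / 2 * Metric.infDist (x 0) Xstar ^ 2 := by
    intro n
    induction n with
    | zero => simp only [Finset.sum_range_succ, Finset.sum_range_zero, zero_add]; linarith [key 0]
    | succ m ih =>
        rw [Finset.sum_range_succ]
        linarith [key (m + 1)]
  intro n
  have hnn : (0:ℝ) ≤ L / 2 * Metric.infDist (x (n + 1)) Xstar ^ 2 := by positivity
  have h1 : (∑ k ∈ Finset.range (n + 1), (f (x k) - fstar))
      ≤ L / 2 * Metric.infDist (x 0) Xstar ^ 2 := by linarith [tel n]
  refine ⟨h1, ?_⟩
  have hn : ((n : ℝ) + 1) ≠ 0 := by positivity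
  have heq : L / (2 * ((n : ℝ) + 1)) * Metric.infDist (x 0) Xstar ^ 2
      = 1 / ((n : ℝ) + 1) * (L / 2 * Metric.infDist (x 0) Xstar ^ 2) := by
    rw [mul_comm 2 ((n : ℝ) + 1), ← div_div]
    ring
  rw [heq]
  exact mul_le_mul_of_nonneg_left h1 (by positivity)
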